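/- arXiv:0912.2514 — 2 statements merged into one kernel-verified Lean document; each statement's English description precedes it below -/
import Mathlib

section
/- The generalized left Fischer cover of a sofic shift is an essential labelled graph: every vertex emits at least one edge and receives at least one edge. -/
/-- The shift map on bi-infinite sequences. -/
def shiftZ {A : Type*} (p : ℤ → A) : ℤ → A := fun i => p (i + 1)

/-- Concatenation `y⁻x⁺` of a left-ray `y` (where `y 0` is the symbol at position `-1`,
`y 1` at position `-2`, …) and a right-ray `x` (where `x n` is the symbol at position `n`). -/
def concat {A : Type*} (y x : ℕ → A) : ℤ → A :=
  fun i => if 0 ≤ i then x i.toNat else y (-(i + 1)).toNat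

/-- The set of right-rays `X⁺` of `X`. -/
def Xplus {A : Type*} (X : Set (ℤ → A)) : Set (ℕ → A) := {x | ∃ y, concat y x ∈ X}

/-- The set of left-rays `X⁻` of `X`. -/
def Xminus {A : Type*} (X : Set (ℤ → A)) : Set (ℕ → A) := {y | ∃ x, concat y x ∈ X}

/-- The predecessor set `P_∞(x⁺)` of a right-ray. -/
def Pray {A : Type*} (X : Set (ℤ → A)) (x : ℕ → A) : Set (ℕ → A) := {y | concat y x ∈ X}

/-- Append a finite word at the (right) end of a left-ray: the word sits closest to the origin. -/
def leftAppend {A : Type*} (y : ℕ → A) (w : List A) : ℕ → A :=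
  fun n => if h : n < w.length then w.reverse.get ⟨n, by simpa using h⟩ else y (n - w.length)

/-- The predecessor set `P_∞(w)` of a finite word: left-rays `y⁻` with `y⁻w ∈ X⁻`. -/
def Pword {A : Type*} (X : Set (ℤ → A)) (w : List A) : Set (ℕ → A) :=
  {y | leftAppend y w ∈ Xminus X}

/-- The prefix `x₁…x_k` of a right-ray. -/
def rayPrefix {A : Type*} (x : ℕ → A) (k : ℕ) : List A := List.ofFn (fun i : Fin k => x i)

/-- `X` is a shift space: it is cut out by a set of forbidden words. -/
def IsShiftSpace {A : Type*} (X : Set (ℤ → A)) : Prop :=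
  ∃ F : Set (List A),
    X = {p : ℤ → A | ∀ (i : ℤ) (n : ℕ), (List.ofFn fun j : Fin n => p (i + j)) ∉ F}

/-- The vertex set of the left Krieger cover: predecessor sets of right-rays of `X`. -/
def KrgV {A : Type*} (X : Set (ℤ → A)) : Set (Set (ℕ → A)) :=
  {P | ∃ x ∈ Xplus X, P = Pray X x}

/-- A vertex `P` of the left Krieger cover is non-decomposable if whenever `P` is the union of a
family of vertices, `P` itself belongs to the family. -/
def NonDecomp {A : Type*} (X : Set (ℤ → A)) (P : Set (ℕ → A)) : Prop :=
  ∀ V : Set (Set (ℕ → A)), V ⊆ KrgV X → P = ⋃₀ V → P ∈ V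

/-- Prepend a letter to a right-ray. -/
def consRay {A : Type*} (a : A) (x : ℕ → A) : ℕ → A :=
  fun n => if n = 0 then a else x (n - 1)

/-- There is an edge labelled `a` from `P` to `Q` in the left Krieger cover iff there is a
right-ray `x⁺ ∈ X⁺` with `P = P_∞(ax⁺)` and `Q = P_∞(x⁺)`. -/
def KrgEdge {A : Type*} (X : Set (ℤ → A)) (a : A) (P Q : Set (ℕ → A)) : Prop :=
  ∃ x ∈ Xplus X, Pray X (consRay a x) = P ∧ Pray X x = Q

/-- The vertex set of the generalized left Fischer cover: vertices of the left Krieger cover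
admitting a path to some non-decomposable vertex. -/
def GFC {A : Type*} (X : Set (ℤ → A)) : Set (Set (ℕ → A)) :=
  {P ∈ KrgV X | ∃ P' ∈ KrgV X, NonDecomp X P' ∧
    Relation.ReflTransGen (fun U W => ∃ a : A, KrgEdge X a U W) P P'}

lemma mem_shift {A : Type*} {X : Set (ℤ → A)} (hX : IsShiftSpace X)
    {p : ℤ → A} (hp : p ∈ X) (k : ℤ) : (fun i => p (i + k)) ∈ X := by
  obtain ⟨F, hF⟩ := hX
  subst hF
  intro i n
  have h := hp (i + k) n
  convert h using 3
  funext j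
  congr 1
  ring

lemma concat_cons_shift {A : Type*} (y x : ℕ → A) (a : A) (i : ℤ) :
    concat y (consRay a x) i = concat (consRay a y) x (i - 1) := by
  simp only [concat, consRay]
  split_ifs <;> first | rfl | (congr 1; omega) | (exfalso; omega)

lemma consRay_tail {A : Type*} (x : ℕ → A) : consRay (x 0) (fun n => x (n + 1)) = x := by
  funext n
  simp only [consRay]
  split_ifs with h
  · rw [h]
  · congr 1; omega

lemma mem_Pray_cons {A : Type*} {X : Set (ℤ → A)} (hX : IsShiftSpace X)
    (a : A) (x y : ℕ → A) :
    y ∈ Pray X (consRay a x) ↔ consRay a y ∈ Pray X x := by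
  constructor
  · intro h
    have h2 := mem_shift hX h 1
    have he : ∀ i : ℤ, concat y (consRay a x) (i + 1) = concat (consRay a y) x i := by
      intro i
      rw [concat_cons_shift]
      congr 1; ring
    have : (fun i => concat y (consRay a x) (i + 1)) = concat (consRay a y) x := funext he
    rwa [this] at h2
  · intro h
    have h2 := mem_shift hX h (-1)
    have he : ∀ i : ℤ, concat (consRay a y) x (i + -1) = concat y (consRay a x) i := by
      intro i
      rw [concat_cons_shift]
      congr 1
    have : (fun i => concat (consRay a y) x (i + -1)) = concat y (consRay a x) := funext he
    rwa [this] at h2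

lemma tail_mem_Xplus {A : Type*} {X : Set (ℤ → A)} (hX : IsShiftSpace X)
    {x : ℕ → A} (hx : x ∈ Xplus X) : (fun n => x (n + 1)) ∈ Xplus X := by
  obtain ⟨y, hy⟩ := hx
  refine ⟨consRay (x 0) y, ?_⟩
  have h2 := mem_shift hX hy 1
  have he : ∀ i : ℤ, concat y x (i + 1) = concat (consRay (x 0) y) (fun n => x (n + 1)) i := by
    intro i
    have h3 := concat_cons_shift y (fun n => x (n + 1)) (x 0) (i + 1)
    rw [consRay_tail] at h3
    rw [h3]
    congr 1; ring
  have : (fun i => concat y x (i + 1)) = concat (consRay (x 0) y) (fun n => x (n + 1)) := funext he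
  rwa [this] at h2

lemma cons_mem_Xplus {A : Type*} {X : Set (ℤ → A)} (hX : IsShiftSpace X)
    {x y : ℕ → A} (h : concat y x ∈ X) : consRay (y 0) x ∈ Xplus X := by
  refine ⟨fun n => y (n + 1), ?_⟩
  have h2 := mem_shift hX h (-1)
  have he : ∀ i : ℤ, concat y x (i + -1) = concat (fun n => y (n + 1)) (consRay (y 0) x) i := by
    intro i
    have h3 := concat_cons_shift (fun n => y (n + 1)) x (y 0) i
    rw [consRay_tail] at h3
    rw [h3]
    congr 1
  have : (fun i => concat y x (i + -1)) = concat (fun n => y (n + 1)) (consRay (y 0) x) := funext he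
  rwa [this] at h2

lemma exists_decomp {A : Type*} (X : Set (ℤ → A)) (hfin : (KrgV X).Finite) :
    ∀ P ∈ KrgV X, ∃ V, V ⊆ KrgV X ∧ (∀ Q ∈ V, NonDecomp X Q) ∧ P = ⋃₀ V := by
  have key : ∀ n : ℕ, ∀ P, P ∈ KrgV X → ({R ∈ KrgV X | R ⊂ P}).ncard = n →
      ∃ V, V ⊆ KrgV X ∧ (∀ Q ∈ V, NonDecomp X Q) ∧ P = ⋃₀ V := by
    intro n
    induction n using Nat.strong_induction_on with
    | _ n ih =>
      intro P hP hcard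
      by_cases hnd : NonDecomp X P
      · exact ⟨{P}, by simpa using hP, by simpa using hnd, by simp⟩
      · simp only [NonDecomp] at hnd
        push_neg at hnd
        obtain ⟨V, hVsub, hPU, hPV⟩ := hnd
        have hQsub : ∀ Q ∈ V, Q ⊂ P := by
          intro Q hQ
          constructor
          · rw [hPU]; exact Set.subset_sUnion_of_mem hQ
          · intro hle
            have : Q = P := Set.Subset.antisymm (by rw [hPU]; exact Set.subset_sUnion_of_mem hQ) hle
            exact hPV (this ▸ hQ)
        have hQlt : ∀ Q ∈ V, ({R ∈ KrgV X | R ⊂ Q}).ncard < n := by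
          intro Q hQ
          rw [← hcard]
          apply Set.ncard_lt_ncard
          · constructor
            · intro R hR
              exact ⟨hR.1, hR.2.trans (hQsub Q hQ)⟩
            · intro hle
              have hmem : Q ∈ {R ∈ KrgV X | R ⊂ P} := ⟨hVsub hQ, hQsub Q hQ⟩
              have := (hle hmem).2
              exact absurd rfl this.ne
          · exact hfin.subset (Set.sep_subset _ _)
        have hex : ∀ Q, Q ∈ V → ∃ W, W ⊆ KrgV X ∧ (∀ R ∈ W, NonDecomp X R) ∧ Q = ⋃₀ W :=
          fun Q hQ => ih _ (hQlt Q hQ) Q (hVsub hQ) rfl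
        choose W hW1 hW2 hW3 using hex
        refine ⟨⋃ (Q : Set (ℕ → A)) (h : Q ∈ V), W Q h, ?_, ?_, ?_⟩
        · intro R hR
          simp only [Set.mem_iUnion] at hR
          obtain ⟨Q, hQ, hRW⟩ := hR
          exact hW1 Q hQ hRW
        · intro R hR
          simp only [Set.mem_iUnion] at hR
          obtain ⟨Q, hQ, hRW⟩ := hR
          exact hW2 Q hQ R hRW
        · ext z
          simp only [Set.mem_sUnion, Set.mem_iUnion]
          constructor
          · intro hz
            rw [hPU] at hz
            obtain ⟨Q, hQ, hzQ⟩ := hz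
            rw [hW3 Q hQ] at hzQ
            obtain ⟨R, hR, hzR⟩ := hzQ
            exact ⟨R, ⟨Q, hQ, hR⟩, hzR⟩
          · rintro ⟨R, ⟨Q, hQ, hR⟩, hzR⟩
            rw [hPU]
            refine ⟨Q, hQ, ?_⟩
            rw [hW3 Q hQ]
            exact ⟨R, hR, hzR⟩
  intro P hP
  exact key _ P hP rfl

lemma replace_lemma {A : Type*} {X : Set (ℤ → A)} (hX : IsShiftSpace X)
    (hfin : (KrgV X).Finite) {a : A} {P Q : Set (ℕ → A)}
    (hPnd : NonDecomp X P) (he : KrgEdge X a P Q) :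
    ∃ Q' ∈ KrgV X, NonDecomp X Q' ∧ KrgEdge X a P Q' := by
  obtain ⟨x, hx, hPx, hQx⟩ := he
  obtain ⟨V, hVsub, hVnd, hQU⟩ := exists_decomp X hfin (Pray X x) ⟨x, hx, rfl⟩
  set W : Set (Set (ℕ → A)) :=
    {R | ∃ x', x' ∈ Xplus X ∧ Pray X x' ∈ V ∧ consRay a x' ∈ Xplus X ∧
      R = Pray X (consRay a x')} with hW
  have hWsub : W ⊆ KrgV X := by
    rintro R ⟨x', _, _, hc, hR⟩
    exact ⟨consRay a x', hc, hR⟩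
  have hPW : P = ⋃₀ W := by
    ext z
    constructor
    · intro hz
      rw [← hPx] at hz
      have h2 : consRay a z ∈ Pray X x := (mem_Pray_cons hX a x z).mp hz
      rw [hQU] at h2
      obtain ⟨Qi, hQi, hzQi⟩ := h2
      obtain ⟨xi, hxi, hQieq⟩ := hVsub hQi
      have h3 : z ∈ Pray X (consRay a xi) :=
        (mem_Pray_cons hX a xi z).mpr (by rw [← hQieq]; exact hzQi)
      have h4 : consRay a xi ∈ Xplus X := ⟨z, h3⟩
      exact ⟨Pray X (consRay a xi), ⟨xi, hxi, by rw [← hQieq]; exact hQi, h4, rfl⟩, h3⟩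
    · rintro ⟨R, ⟨x', hx', hVmem, hcons, rfl⟩, hzR⟩
      have h5 : consRay a z ∈ Pray X x' := (mem_Pray_cons hX a x' z).mp hzR
      have h6 : consRay a z ∈ Pray X x := by
        rw [hQU]
        exact ⟨Pray X x', hVmem, h5⟩
      rw [← hPx]
      exact (mem_Pray_cons hX a x z).mpr h6
  obtain ⟨x', hx', hVmem, hcons, hPeq⟩ := hPnd W hWsub hPW
  exact ⟨Pray X x', ⟨x', hx', rfl⟩, hVnd _ hVmem, ⟨x', hx', hPeq.symm, rfl⟩⟩

/-- The generalized left Fischer cover of a sofic shift is essential: every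
vertex emits an edge into the cover and receives an edge from the cover. -/
theorem stmt7 {A : Type*} (X : Set (ℤ → A)) (hX : IsShiftSpace X)
    (hsofic : (KrgV X).Finite) :
    ∀ P ∈ GFC X,
      (∃ (a : A) (Q : Set (ℕ → A)), Q ∈ GFC X ∧ KrgEdge X a P Q) ∧
      (∃ (a : A) (Q : Set (ℕ → A)), Q ∈ GFC X ∧ KrgEdge X a Q P) := by
  intro P hP
  obtain ⟨hPK, P', hP'K, hP'nd, hpath⟩ := hP
  constructor
  · rcases Relation.ReflTransGen.cases_head hpath with heq | ⟨Q₀, ⟨a, he⟩, hrest⟩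
    · subst heq
      obtain ⟨x, hx, hPx⟩ := hPK
      have htail : (fun n => x (n + 1)) ∈ Xplus X := tail_mem_Xplus hX hx
      have he : KrgEdge X (x 0) P (Pray X fun n => x (n + 1)) :=
        ⟨_, htail, by rw [consRay_tail]; exact hPx.symm, rfl⟩
      obtain ⟨Q', hQ'K, hQ'nd, he'⟩ := replace_lemma hX hsofic hP'nd he
      exact ⟨x 0, Q', ⟨hQ'K, Q', hQ'K, hQ'nd, Relation.ReflTransGen.refl⟩, he'⟩
    · have hQ₀K : Q₀ ∈ KrgV X := by
        obtain ⟨x, hx, _, hQx⟩ := he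
        exact ⟨x, hx, hQx.symm⟩
      exact ⟨a, Q₀, ⟨hQ₀K, P', hP'K, hP'nd, hrest⟩, he⟩
  · obtain ⟨x, hx, hPx⟩ := hPK
    obtain ⟨y, hy⟩ := hx
    have hc : consRay (y 0) x ∈ Xplus X := cons_mem_Xplus hX hy
    have he : KrgEdge X (y 0) (Pray X (consRay (y 0) x)) P := ⟨x, ⟨y, hy⟩, rfl, hPx.symm⟩
    exact ⟨y 0, _, ⟨⟨_, hc, rfl⟩, P', hP'K, hP'nd,
      Relation.ReflTransGen.head ⟨y 0, he⟩ hpath⟩, he⟩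
end

section
/- If a sofic shift X satisfies Condition (*), then every vertex of the past set cover lying in an essential (every vertex emits and receives an edge) subgraph is a vertex of the left Krieger cover, i.e., is the predecessor set of some right-ray. -/
/-- The language `B(X)` of `X`: words occurring (at position 0) in some point of `X`. -/
def Blang {A : Type*} (X : Set (ℤ → A)) : Set (List A) :=
  {w | ∃ p ∈ X, ∀ i : Fin w.length, p (i : ℕ) = w.get i}

/-- Prepend a finite word to a right-ray. -/
def wordRay {A : Type*} (w : List A) (x : ℕ → A) : ℕ → A :=
  fun n => if h : n < w.length then w.get ⟨n, h⟩ else x (n - w.length)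

/-- `P_l(w)`: words of length at most `l` which can precede the word `w`. -/
def Pl {A : Type*} (X : Set (ℤ → A)) (l : ℕ) (w : List A) : Set (List A) :=
  {v | v.length ≤ l ∧ (v ++ w) ∈ Blang X}

/-- `P_l(x⁺)`: words of length at most `l` which can precede the right-ray `x⁺`. -/
def PlRay {A : Type*} (X : Set (ℤ → A)) (l : ℕ) (x : ℕ → A) : Set (List A) :=
  {v | v.length ≤ l ∧ wordRay v x ∈ Xplus X}

/-- Condition (*) of Carlsen and Matsumoto. -/
def CondStar {A : Type*} (X : Set (ℤ → A)) : Prop :=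
  ∀ (l : ℕ) (F : Set (List A)), F ⊆ Blang X → F.Infinite →
    (∀ u ∈ F, ∀ v ∈ F, Pl X l u = Pl X l v) →
    ∃ x ∈ Xplus X, ∀ w ∈ F, Pl X l w = PlRay X l x

/-- The vertex set of the past set cover: predecessor sets of words of `X`. -/
def PscV {A : Type*} (X : Set (ℤ → A)) : Set (Set (ℕ → A)) :=
  {P | ∃ w ∈ Blang X, P = Pword X w}

/-- The edge labelled `a` from `P` to `Q` in the past set cover. -/
def PscEdge {A : Type*} (X : Set (ℤ → A)) (a : A) (P Q : Set (ℕ → A)) : Prop :=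
  ∃ w ∈ Blang X, (a :: w) ∈ Blang X ∧ Pword X (a :: w) = P ∧ Pword X w = Q

/-- An essential subgraph of the past set cover: a set of vertices each of which emits an edge
into the set and receives an edge from the set. -/
def EssentialSub {A : Type*} (X : Set (ℤ → A)) (H : Set (Set (ℕ → A))) : Prop :=
  H ⊆ PscV X ∧ ∀ P ∈ H,
    (∃ (a : A) (Q : Set (ℕ → A)), Q ∈ H ∧ PscEdge X a P Q) ∧
    (∃ (a : A) (Q : Set (ℕ → A)), Q ∈ H ∧ PscEdge X a Q P)


section Aux
variable {A : Type*}

lemma shift_mem {X : Set (ℤ → A)} (hX : IsShiftSpace X) {p : ℤ → A}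
    (hp : p ∈ X) (k : ℤ) : (fun i => p (i + k)) ∈ X := by
  obtain ⟨F, rfl⟩ := hX
  intro i n
  have h : (List.ofFn fun j : Fin n => (fun i => p (i + k)) (i + j))
      = List.ofFn fun j : Fin n => p (i + k + j) := by
    congr 1; funext j; ring_nf
  rw [h]
  exact hp (i + k) n

lemma leftAppend_cons (y : ℕ → A) (a : A) (u : List A) :
    leftAppend y (a :: u) = leftAppend (leftAppend y [a]) u := by
  funext n
  simp only [leftAppend, List.length_cons, List.reverse_cons, List.get_eq_getElem]
  rcases lt_trichotomy n u.length with h | h | h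
  · rw [dif_pos (by omega), dif_pos h, List.getElem_append_left (by simpa using h)]
  · subst h
    rw [dif_neg (lt_irrefl _), dif_pos (Nat.lt_succ_self _)]
    simp [leftAppend]
  · rw [dif_neg (by omega), dif_neg (by omega), dif_neg (by simp; omega)]
    congr 1

lemma mem_Pword_cons {X : Set (ℤ → A)} {y : ℕ → A} {a : A} {u : List A} :
    y ∈ Pword X (a :: u) ↔ leftAppend y [a] ∈ Pword X u := by
  unfold Pword
  rw [Set.mem_setOf_eq, Set.mem_setOf_eq, leftAppend_cons]

lemma Pword_cons_congr {X : Set (ℤ → A)} {u v : List A} (a : A)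
    (h : Pword X u = Pword X v) : Pword X (a :: u) = Pword X (a :: v) := by
  ext y
  rw [mem_Pword_cons, mem_Pword_cons, h]

lemma Pword_nonempty {X : Set (ℤ → A)} (hX : IsShiftSpace X) {w : List A}
    (hw : w ∈ Blang X) : (Pword X w).Nonempty := by
  obtain ⟨p, hp, hpw⟩ := hw
  refine ⟨fun n => p (-(n : ℤ) - 1), ?_⟩
  refine ⟨fun m => p ((m : ℤ) + w.length), ?_⟩
  have hq := shift_mem hX hp (w.length : ℤ)
  convert hq using 1
  funext i
  simp only [concat, leftAppend]
  split_ifs with h0 hlt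
  · congr 1
    omega
  · have hi : i = -(((-(i + 1)).toNat : ℤ)) - 1 := by omega
    have hlt' : ((-(i + 1)).toNat : ℤ) < (w.length : ℤ) := by exact_mod_cast hlt
    rw [List.get_eq_getElem, List.getElem_reverse]
    have hix : (i : ℤ) = (w.length : ℤ) - ((-(i + 1)).toNat : ℤ) - 1 - (w.length : ℤ) + (w.length:ℤ) - (w.length:ℤ) := by omega
    have hget := hpw ⟨w.length - 1 - (-(i + 1)).toNat, by omega⟩
    simp only [List.get_eq_getElem] at hget
    rw [← hget]
    congr 1
    push_cast [Nat.cast_sub (by omega : (-(i + 1)).toNat ≤ w.length - 1)]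
    omega
  · congr 1
    omega

lemma mem_Blang_of_Pword_nonempty {X : Set (ℤ → A)} (hX : IsShiftSpace X) {w : List A}
    (hw : (Pword X w).Nonempty) : w ∈ Blang X := by
  obtain ⟨y, x, hx⟩ := hw
  refine ⟨fun i => concat (leftAppend y w) x (i - w.length), shift_mem hX hx (-(w.length : ℤ)), ?_⟩
  intro i
  have hi : (i : ℕ) < w.length := i.2
  simp only [concat, leftAppend]
  rw [if_neg (by omega)]
  have hn : (-(((i:ℕ):ℤ) - (w.length:ℤ) + 1)).toNat = w.length - 1 - (i:ℕ) := by omega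
  rw [hn, dif_pos (by omega), List.get_eq_getElem, List.get_eq_getElem, List.getElem_reverse]
  congr 1
  simp only [Fin.val_mk, List.length_reverse]
  omega

lemma long_words {X : Set (ℤ → A)} {H : Set (Set (ℕ → A))} (hH : EssentialSub X H) :
    ∀ k : ℕ, ∀ Q ∈ H, ∃ w : List A, Pword X w = Q ∧ k ≤ w.length := by
  intro k
  induction k with
  | zero =>
    intro Q hQ
    obtain ⟨w, _, rfl⟩ := hH.1 hQ
    exact ⟨w, rfl, Nat.zero_le _⟩
  | succ k ih =>
    intro Q hQ
    obtain ⟨a, S, hS, w', _, _, hPQ, hPS⟩ := (hH.2 Q hQ).1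
    obtain ⟨u, hu, hlen⟩ := ih S hS
    refine ⟨a :: u, ?_, by simp; omega⟩
    rw [Pword_cons_congr a (hu.trans hPS.symm), hPQ]

end Aux

/-- If a sofic shift `X` satisfies Condition (*), then every vertex of the past
set cover lying in an essential subgraph is a vertex of the left Krieger cover, i.e. the
predecessor set of some right-ray. -/
theorem stmt13 {A : Type*} (X : Set (ℤ → A)) (hX : IsShiftSpace X)
    (hsofic : {P : Set (ℕ → A) | ∃ w : List A, P = Pword X w}.Finite)
    (hm : ∃ m : ℕ,
      (∀ u v : List A, u ∈ Blang X → v ∈ Blang X →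
        (Pl X m u = Pl X m v ↔ Pword X u = Pword X v)) ∧
      (∀ w ∈ Blang X, ∀ x ∈ Xplus X, (Pl X m w = PlRay X m x ↔ Pword X w = Pray X x)) ∧
      (∀ x ∈ Xplus X, ∀ y ∈ Xplus X, (PlRay X m x = PlRay X m y ↔ Pray X x = Pray X y)))
    (hstar : CondStar X) :
    ∀ P : Set (ℕ → A), (∃ H, EssentialSub X H ∧ P ∈ H) →
      ∃ x ∈ Xplus X, Pray X x = P := by
  rintro P ⟨H, hH, hPH⟩
  obtain ⟨m, hm1, hm2, _⟩ := hm
  obtain ⟨w₀, hw₀B, hw₀⟩ := hH.1 hPH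
  have hPne : (Pword X w₀).Nonempty := Pword_nonempty hX hw₀B
  set F : Set (List A) := {w | w ∈ Blang X ∧ Pword X w = P} with hF
  have hmemF : ∀ w : List A, Pword X w = P → w ∈ F := by
    intro w hw
    have : (Pword X w).Nonempty := by rw [hw, hw₀]; exact hPne
    exact ⟨mem_Blang_of_Pword_nonempty hX this, hw⟩
  have hFsub : F ⊆ Blang X := fun w hw => hw.1
  have hFinf : F.Infinite := by
    intro hfin
    obtain ⟨N, hN⟩ := (hfin.image List.length).bddAbove
    obtain ⟨w, hw, hwl⟩ := long_words hH (N + 1) P hPH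
    have := hN ⟨w, hmemF w hw, rfl⟩
    omega
  have heq : ∀ u ∈ F, ∀ v ∈ F, Pl X m u = Pl X m v := fun u hu v hv =>
    (hm1 u v hu.1 hv.1).2 (hu.2.trans hv.2.symm)
  obtain ⟨x, hx, hxF⟩ := hstar m F hFsub hFinf heq
  obtain ⟨w₁, hw₁⟩ := hFinf.nonempty
  exact ⟨x, hx, ((hm2 w₁ hw₁.1 x hx).1 (hxF w₁ hw₁)).symm.trans hw₁.2⟩
end
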